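/- Let n ≥ 1 and k an integer. There exists a (4n)×(4n) integer matrix P with Pᵀ P = k·I_{4n} if and only if k ≥ 0. (This is the algebraic content of: there is a degree k map f: (ℂP²)^{♯4n} → (ℂP²)^{♯4n} if and only if k is a nonnegative integer.) -/
import Mathlib


open Matrix

lemma quat_mat_aux (a b c d : ℤ) :
    (!![a, b, c, d; -b, a, -d, c; -c, d, a, -b; -d, -c, b, a])ᵀ *
      (!![a, b, c, d; -b, a, -d, c; -c, d, a, -b; -d, -c, b, a]) =
      (a^2 + b^2 + c^2 + d^2) • (1 : Matrix (Fin 4) (Fin 4) ℤ) := by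
  ext i j
  fin_cases i <;> fin_cases j <;>
    simp [Matrix.mul_apply, Fin.sum_univ_four, Matrix.one_apply, Matrix.transpose, Matrix.vecHead, Matrix.vecTail] <;> ring

theorem degree_cp2_four_n_connected_sum {n : ℕ} (hn : 1 ≤ n) (k : ℤ) :
    (∃ P : Matrix (Fin (4 * n)) (Fin (4 * n)) ℤ,
        Pᵀ * P = k • (1 : Matrix (Fin (4 * n)) (Fin (4 * n)) ℤ)) ↔ 0 ≤ k := by
  constructor
  · rintro ⟨P, h⟩
    have hi : 0 < 4 * n := by omega
    let i : Fin (4 * n) := ⟨0, hi⟩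
    have h2 := congrFun (congrFun h i) i
    have hl : (Pᵀ * P) i i = ∑ j, P j i * P j i := by
      simp [Matrix.mul_apply, Matrix.transpose_apply]
    have hr : (k • (1 : Matrix (Fin (4 * n)) (Fin (4 * n)) ℤ)) i i = k := by
      simp [Matrix.one_apply]
    rw [hl, hr] at h2
    rw [← h2]
    exact Finset.sum_nonneg fun j _ => mul_self_nonneg _
  · intro hk
    obtain ⟨a, b, c, d, habcd⟩ := Nat.sum_four_squares k.toNat
    have hk' : (a : ℤ)^2 + (b : ℤ)^2 + (c : ℤ)^2 + (d : ℤ)^2 = k := by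
      have := congrArg (Nat.cast : ℕ → ℤ) habcd
      push_cast at this
      rw [this, Int.toNat_of_nonneg hk]
    set Q : Matrix (Fin 4) (Fin 4) ℤ :=
      !![(a:ℤ), b, c, d; -b, a, -d, c; -c, d, a, -b; -d, -c, b, a] with hQ
    have hQQ : Qᵀ * Q = k • (1 : Matrix (Fin 4) (Fin 4) ℤ) := by
      rw [hQ, quat_mat_aux, hk']
    let e : Fin 4 × Fin n ≃ Fin (4 * n) := finProdFinEquiv
    refine ⟨(blockDiagonal fun _ : Fin n => Q).submatrix e.symm e.symm, ?_⟩
    rw [Matrix.transpose_submatrix, Matrix.blockDiagonal_transpose,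
      Matrix.submatrix_mul_equiv, ← Matrix.blockDiagonal_mul]
    have h1 : (fun _ : Fin n => Qᵀ * Q) = fun _ : Fin n => k • (1 : Matrix (Fin 4) (Fin 4) ℤ) := by
      funext; rw [hQQ]
    have h2 : blockDiagonal (fun _ : Fin n => k • (1 : Matrix (Fin 4) (Fin 4) ℤ)) =
        k • (1 : Matrix (Fin 4 × Fin n) (Fin 4 × Fin n) ℤ) := by
      rw [show (fun _ : Fin n => k • (1 : Matrix (Fin 4) (Fin 4) ℤ)) =
          k • (fun _ : Fin n => (1 : Matrix (Fin 4) (Fin 4) ℤ)) from rfl,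
        Matrix.blockDiagonal_smul]
      congr 1
      exact Matrix.blockDiagonal_one
    rw [h1, h2]
    ext i j
    simp [Matrix.submatrix_apply, Matrix.smul_apply, Matrix.one_apply,
      EmbeddingLike.apply_eq_iff_eq, ← Matrix.diagonal_intCast, Matrix.diagonal_apply]
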